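/- If a hypergram (V,H,G) admits an n-qubit Pauli assignment for some n, then the product over 𝔽₂ of its context matrix by its anticommutation matrix is the zero matrix; equivalently, for every hyperedge h ∈ H and every vertex j ∈ V, the number of vertices i ∈ h with {i,j} ∈ G is even. -/

import Mathlib

open scoped Classical
open Matrix

noncomputable section

/-- The space of `n`-qubit operators, realized as matrices indexed by
`Fin n → Fin 2` (the `n`-fold tensor-product index). -/
abbrev QMat (n : ℕ) := Matrix (Fin n → Fin 2) (Fin n → Fin 2) ℂ

/-- The four Pauli matrices `I, X, Y, Z`. -/
def pauliMat : Fin 4 → Matrix (Fin 2) (Fin 2) ℂ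
  | ⟨0, _⟩ => 1
  | ⟨1, _⟩ => !![0, 1; 1, 0]
  | ⟨2, _⟩ => !![0, -Complex.I; Complex.I, 0]
  | ⟨3, _⟩ => !![1, 0; 0, -1]

/-- The `n`-fold Kronecker (tensor) product `G₁ ⊗ ⋯ ⊗ Gₙ` of the Pauli matrices
selected by `g : Fin n → Fin 4`, as a matrix indexed by `Fin n → Fin 2`. -/
def nPauli {n : ℕ} (g : Fin n → Fin 4) : QMat n :=
  Matrix.of fun r c => ∏ k, pauliMat (g k) (r k) (c k)

/-- `M` is an `n`-qubit Pauli observable. -/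
def IsPauliObs (n : ℕ) (M : QMat n) : Prop := ∃ g : Fin n → Fin 4, M = nPauli g

/-- `I^⊗n`, the `n`-fold tensor product of the identity. -/
def idN (n : ℕ) : QMat n := nPauli (fun _ => ⟨0, by omega⟩)

/-- Product of `f` over a finite set of naturals, taken in increasing order
(well-defined without commutativity; agrees with the unordered product when the
factors pairwise commute). -/
def natFinsetProd {M : Type*} [Monoid M] (s : Finset ℕ) (f : ℕ → M) : M :=
  ((s.sort (· ≤ ·)).map f).prod

/-- `(V,H,G)` is a hypergram: `V` a nonempty finite vertex set, `H` a set of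
nonempty hyperedges covering `V`, `G` a set of 2-element edges on `V` forming a
simple reduced graph, no edge of `G` being contained in a hyperedge of `H`. -/
def IsHypergram (V : Finset ℕ) (H G : Finset (Finset ℕ)) : Prop :=
  V.Nonempty ∧
  (∀ h ∈ H, h ⊆ V ∧ h.Nonempty) ∧
  (∀ v ∈ V, ∃ h ∈ H, v ∈ h) ∧
  (∀ e ∈ G, e ⊆ V ∧ e.card = 2) ∧
  (∀ v ∈ V, ∃ e ∈ G, v ∈ e) ∧
  (∀ v ∈ V, ∀ w ∈ V,
    (∀ u ∈ V, (({v, u} : Finset ℕ) ∈ G ↔ ({w, u} : Finset ℕ) ∈ G)) → v = w) ∧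
  (∀ e ∈ G, ∀ h ∈ H, ¬ e ⊆ h)

/-- `α` is an `n`-qubit Pauli assignment of the hypergram `(V,H,G)`. -/
def IsPauliAssignment (V : Finset ℕ) (H G : Finset (Finset ℕ)) (n : ℕ)
    (α : ℕ → QMat n) : Prop :=
  (∀ v ∈ V, IsPauliObs n (α v)) ∧
  (∀ v ∈ V, α v ≠ idN n) ∧
  (∀ v₁ ∈ V, ∀ v₂ ∈ V, α v₁ = α v₂ → v₁ = v₂) ∧
  (∀ v₁ ∈ V, ∀ v₂ ∈ V, v₁ ≠ v₂ →
    (α v₁ * α v₂ = -(α v₂ * α v₁) ↔ ({v₁, v₂} : Finset ℕ) ∈ G)) ∧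
  (∀ h ∈ H, natFinsetProd h α = idN n ∨ natFinsetProd h α = -(idN n))

/-- The sign `sgn_α(h) ∈ {−1,1}` of a hyperedge `h`: `∏_{v∈h} α(v) = sgn_α(h)·I^⊗n`. -/
def quantumSgn {n : ℕ} (α : ℕ → QMat n) (h : Finset ℕ) : ℤ :=
  if natFinsetProd h α = idN n then 1 else -1

/-- The sign `sgn_a(h) = ∏_{v∈h} a(v)` of a hyperedge for a classical assignment. -/
def classicalSgn (a : ℕ → ℤ) (h : Finset ℕ) : ℤ := ∏ v ∈ h, a v

/-- The contextuality degree of a Pauli assignment: the minimum over classical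
assignments `a : V → {−1,1}` of the number of hyperedges whose signs differ. -/
def contextualityDegree {n : ℕ} (H : Finset (Finset ℕ)) (α : ℕ → QMat n) : ℕ :=
  sInf { d : ℕ | ∃ a : ℕ → ℤ, (∀ v, a v = 1 ∨ a v = -1) ∧
    d = (H.filter (fun h => quantumSgn α h ≠ classicalSgn a h)).card }

/-- The context (incidence) matrix of a hypergram over 𝔽₂. -/
def contextMatrix (V : Finset ℕ) (H : Finset (Finset ℕ)) :
    Matrix {h // h ∈ H} {v // v ∈ V} (ZMod 2) :=
  Matrix.of fun h v => if v.1 ∈ h.1 then 1 else 0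

/-- The anticommutation (adjacency) matrix of a hypergram over 𝔽₂. -/
def anticommMatrix (V : Finset ℕ) (G : Finset (Finset ℕ)) :
    Matrix {v // v ∈ V} {v // v ∈ V} (ZMod 2) :=
  Matrix.of fun i j => if ({i.1, j.1} : Finset ℕ) ∈ G then 1 else 0

/-- The standard symplectic form on `𝔽₂^{2n}`:
`⟨x,y⟩ = Σ_{k=1}^{n} (x_{2k−1} y_{2k} + x_{2k} y_{2k−1})`. -/
def sympForm (n : ℕ) (x y : Fin (2 * n) → ZMod 2) : ZMod 2 :=
  ∑ k : Fin n,
    (x ⟨2 * k.1, by have := k.2; omega⟩ * y ⟨2 * k.1 + 1, by have := k.2; omega⟩ +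
     x ⟨2 * k.1 + 1, by have := k.2; omega⟩ * y ⟨2 * k.1, by have := k.2; omega⟩)

/-- The single-qubit encoding `ψ(I)=(0,0), ψ(X)=(0,1), ψ(Y)=(1,1), ψ(Z)=(1,0)`. -/
def psi4 : Fin 4 → (ZMod 2) × (ZMod 2)
  | ⟨0, _⟩ => (0, 0)
  | ⟨1, _⟩ => (0, 1)
  | ⟨2, _⟩ => (1, 1)
  | ⟨3, _⟩ => (1, 0)

/-- The encoding `ψ` of an `n`-qubit Pauli observable (given by its tensor
factors `g`) as a vector of `𝔽₂^{2n}`, concatenating the per-factor encodings. -/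
def psiVec {n : ℕ} (g : Fin n → Fin 4) : Fin (2 * n) → ZMod 2 := fun idx =>
  if idx.1 % 2 = 0 then (psi4 (g ⟨idx.1 / 2, by have := idx.2; omega⟩)).1
  else (psi4 (g ⟨idx.1 / 2, by have := idx.2; omega⟩)).2

/-- All pairs of elements of `S` commute. -/
def PairComm {n : ℕ} (S : Finset (QMat n)) : Prop := ∀ a ∈ S, ∀ b ∈ S, a * b = b * a

/-- The (well-defined) product of a finite set of pairwise commuting matrices. -/
def commProd {n : ℕ} (S : Finset (QMat n)) (h : PairComm S) : QMat n :=
  S.noncommProd id (fun a ha b hb _ => h a ha b hb)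

/-- Pairwise commutation is inherited by subsets. -/
def pairCommOfSubset {n : ℕ} {S T : Finset (QMat n)} (hST : S ⊆ T) (h : PairComm T) :
    PairComm S := fun a ha b hb => h a (hST ha) b (hST hb)

/-- `Q` (pairwise commuting) is independent: no nonempty subset has product `±I^⊗n`. -/
def IsIndep {n : ℕ} (Q : Finset (QMat n)) (hQ : PairComm Q) : Prop :=
  ∀ S : Finset (QMat n), ∀ (hS : S ⊆ Q), S.Nonempty →
    commProd S (pairCommOfSubset hS hQ) ≠ idN n ∧
    commProd S (pairCommOfSubset hS hQ) ≠ -(idN n)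

/-- The vertex set `{1, …, 15}`. -/
def V15 : Finset ℕ := Finset.Icc 1 15

/-- The 15 lines of the doily. -/
def doilyLines : Finset (Finset ℕ) :=
  { {1,2,3}, {1,8,9}, {1,10,11}, {2,4,6}, {2,5,7}, {3,12,15}, {3,13,14},
    {4,8,12}, {4,10,14}, {5,8,13}, {5,10,15}, {6,9,15}, {6,11,13},
    {7,9,14}, {7,11,12} }

/-- The 10 lines of the two-spread `H_{2s}`. -/
def twoSpreadLines : Finset (Finset ℕ) :=
  { {1,2,3}, {1,10,11}, {2,4,6}, {3,13,14}, {4,8,12}, {5,8,13}, {5,10,15},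
    {6,9,15}, {7,9,14}, {7,11,12} }

/-- The anticommutation graph `G_d = G_{2s}`: pairs of distinct vertices not on a
common doily line. -/
def doilyG : Finset (Finset ℕ) :=
  (V15.powersetCard 2).filter (fun e => ∀ h ∈ doilyLines, ¬ e ⊆ h)


-- ===== auxiliary lemmas =====

lemma pauliMat_sq (a : Fin 4) : pauliMat a * pauliMat a = 1 := by
  fin_cases a <;>
    simp [pauliMat] <;>
    · ext i j
      fin_cases i <;> fin_cases j <;>
        simp [Matrix.mul_apply, Fin.sum_univ_two, Matrix.one_apply, Complex.I_mul_I]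

lemma pauli_dichotomy (a b : Fin 4) : pauliMat a * pauliMat b = pauliMat b * pauliMat a ∨
    pauliMat a * pauliMat b = -(pauliMat b * pauliMat a) := by
  fin_cases a <;> fin_cases b <;>
    first
      | (left; ext i j; fin_cases i <;> fin_cases j <;>
          simp [pauliMat, Matrix.mul_apply, Matrix.neg_apply, Fin.sum_univ_two,
            Complex.I_mul_I]; done)
      | (right; ext i j; fin_cases i <;> fin_cases j <;>
          simp [pauliMat, Matrix.mul_apply, Matrix.neg_apply, Fin.sum_univ_two,
            Complex.I_mul_I]; done)

def pSign (a b : Fin 4) : ℂ :=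
  if pauliMat a * pauliMat b = pauliMat b * pauliMat a then 1 else -1

lemma pSign_mul (a b : Fin 4) :
    pauliMat a * pauliMat b = pSign a b • (pauliMat b * pauliMat a) := by
  unfold pSign
  split_ifs with hc
  · simpa using hc
  · rcases pauli_dichotomy a b with h | h
    · exact absurd h hc
    · simpa using h

lemma pSign_pm (a b : Fin 4) : pSign a b = 1 ∨ pSign a b = -1 := by
  unfold pSign; split_ifs <;> simp

lemma idN_eq_one (n : ℕ) : idN n = 1 := by
  ext r c
  simp only [idN, nPauli, Matrix.of_apply, pauliMat]
  by_cases h : r = c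
  · subst h
    simp [Matrix.one_apply]
  · obtain ⟨k, hk⟩ := Function.ne_iff.mp h
    rw [Matrix.one_apply_ne h]
    exact Finset.prod_eq_zero (Finset.mem_univ k) (Matrix.one_apply_ne hk)

lemma nPauli_mul {n : ℕ} (g g' : Fin n → Fin 4) :
    nPauli g * nPauli g' =
      Matrix.of fun r c => ∏ k, (pauliMat (g k) * pauliMat (g' k)) (r k) (c k) := by
  ext r c
  simp only [Matrix.mul_apply, nPauli, Matrix.of_apply]
  have := Finset.prod_univ_sum (fun _ : Fin n => (Finset.univ : Finset (Fin 2)))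
    (fun k j => pauliMat (g k) (r k) j * pauliMat (g' k) j (c k))
  simp only [Fintype.piFinset_univ] at this
  simp_rw [← Finset.prod_mul_distrib]
  exact this.symm

lemma nPauli_sq {n : ℕ} (g : Fin n → Fin 4) : nPauli g * nPauli g = 1 := by
  rw [nPauli_mul, ← idN_eq_one]
  ext r c
  simp only [Matrix.of_apply, idN, nPauli]
  exact Finset.prod_congr rfl fun k _ => by rw [pauliMat_sq]; rfl

lemma nPauli_ne_zero {n : ℕ} (g : Fin n → Fin 4) : nPauli g ≠ 0 := by
  intro h
  have : (1 : QMat n) = 0 := by rw [← nPauli_sq g, h, zero_mul]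
  exact one_ne_zero this

lemma nPauli_comm_dichotomy {n : ℕ} (g g' : Fin n → Fin 4) :
    nPauli g * nPauli g' = nPauli g' * nPauli g ∨
    nPauli g * nPauli g' = -(nPauli g' * nPauli g) := by
  have key : nPauli g * nPauli g' = (∏ k, pSign (g k) (g' k)) • (nPauli g' * nPauli g) := by
    rw [nPauli_mul, nPauli_mul]
    ext r c
    simp only [Matrix.of_apply, Matrix.smul_apply, smul_eq_mul, ← Finset.prod_mul_distrib]
    refine Finset.prod_congr rfl fun k _ => ?_
    rw [pSign_mul (g k) (g' k)]
    simp
  have hpm : (∏ k, pSign (g k) (g' k)) = 1 ∨ (∏ k, pSign (g k) (g' k)) = -1 := by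
    refine Finset.prod_induction _ (fun x => x = 1 ∨ x = -1) ?_ (by left; rfl)
      (fun k _ => pSign_pm _ _)
    rintro x y (rfl | rfl) (rfl | rfl) <;> norm_num
  rcases hpm with hp | hp
  · left; rw [key, hp, one_smul]
  · right; rw [key, hp]; simp

lemma list_comm_pull {n : ℕ} (M : QMat n) (α : ℕ → QMat n) (ε : ℕ → ℂ) :
    ∀ l : List ℕ, (∀ v ∈ l, α v * M = ε v • (M * α v)) →
      (l.map α).prod * M = (l.map ε).prod • (M * (l.map α).prod)
  | [], _ => by simp
  | v :: l, hl => by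
    have ih := list_comm_pull M α ε l (fun w hw => hl w (List.mem_cons_of_mem _ hw))
    have hv := hl v (List.mem_cons_self (a := v) (l := l))
    simp only [List.map_cons, List.prod_cons]
    calc α v * (l.map α).prod * M = α v * ((l.map α).prod * M) := by rw [mul_assoc]
      _ = α v * ((l.map ε).prod • (M * (l.map α).prod)) := by rw [ih]
      _ = (l.map ε).prod • (α v * M * (l.map α).prod) := by
            rw [mul_smul_comm, mul_assoc]
      _ = (l.map ε).prod • ((ε v • (M * α v)) * (l.map α).prod) := by rw [hv]
      _ = (ε v * (l.map ε).prod) • (M * (α v * (l.map α).prod)) := by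
            rw [smul_mul_assoc, smul_smul, mul_assoc, mul_comm (ε v) (List.map ε l).prod]

/-- If a hypergram admits a Pauli assignment then its context matrix
times its anticommutation matrix is zero over 𝔽₂; equivalently, every vertex has
an even number of `G`-neighbours in every hyperedge. -/
theorem assignable_implies_matrix_condition
    (V : Finset ℕ) (H G : Finset (Finset ℕ)) (hgram : IsHypergram V H G)
    (hassign : ∃ n, ∃ α : ℕ → QMat n, IsPauliAssignment V H G n α) :
    contextMatrix V H * anticommMatrix V G = 0 ∧
    ∀ h ∈ H, ∀ j ∈ V,
      Even ((h.filter (fun i => ({i, j} : Finset ℕ) ∈ G)).card) := by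
  obtain ⟨n, α, hPauli, _hne, _hinj, hAC, hprod⟩ := hassign
  have key : ∀ h ∈ H, ∀ j ∈ V,
      Even ((h.filter (fun i => ({i, j} : Finset ℕ) ∈ G)).card) := by
    intro h hh j hj
    have hhV : h ⊆ V := (hgram.2.1 h hh).1
    obtain ⟨gj, hgj⟩ := hPauli j hj
    set M := α j with hM
    set ε : ℕ → ℂ := fun v => if ({v, j} : Finset ℕ) ∈ G then -1 else 1 with hε
    have hstep : ∀ v ∈ h.sort (· ≤ ·), α v * M = ε v • (M * α v) := by
      intro v hv
      rw [Finset.mem_sort] at hv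
      have hvV : v ∈ V := hhV hv
      by_cases hvj : v = j
      · subst hvj
        have hng : ({v} : Finset ℕ) ∉ G := by
          intro hmem
          have := (hgram.2.2.2.1 _ hmem).2
          simp at this
        have : ({v, v} : Finset ℕ) = {v} := by simp
        simp only [hε, this, hng, if_false, one_smul]
        rfl
      by_cases hedge : ({v, j} : Finset ℕ) ∈ G
      · have hac := (hAC v hvV j hj hvj).mpr hedge
        rw [← hM] at hac
        simp [hε, hedge, hac]
      · obtain ⟨gv, hgv⟩ := hPauli v hvV
        have hd := nPauli_comm_dichotomy gv gj
        rw [← hgv, ← hgj] at hd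
        rcases hd with hc | ha
        · simp only [hε, hedge, if_false, one_smul]
          exact hc
        · exact absurd ((hAC v hvV j hj hvj).mp (by rw [← hM]; exact ha)) hedge
    have main := list_comm_pull M α ε (h.sort (· ≤ ·)) hstep
    have hS : (((h.sort (· ≤ ·)).map ε)).prod = ∏ v ∈ h, ε v := by
      rw [Finset.prod, ← Finset.sort_eq (s := h) (r := (· ≤ ·)), Multiset.map_coe, Multiset.prod_coe]
    have hMS : M = (∏ v ∈ h, ε v) • M := by
      rcases hprod h hh with hp | hp <;>
        rw [idN_eq_one] at hp <;>
        rw [show natFinsetProd h α = ((h.sort (· ≤ ·)).map α).prod from rfl] at hp <;>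
        rw [hp, hS] at main
      · simpa using main
      · have : -M = (∏ v ∈ h, ε v) • (-M) := by simpa using main
        rw [smul_neg] at this
        exact neg_inj.mp this
    have hS1 : (∏ v ∈ h, ε v) = 1 := by
      have h0 : (1 - ∏ v ∈ h, ε v) • M = 0 := by
        rw [sub_smul, one_smul, ← hMS, sub_self]
      rcases smul_eq_zero.mp h0 with h1 | h2
      · linear_combination -h1
      · exact absurd h2 (by rw [hgj]; exact nPauli_ne_zero gj)
    have hpow : (∏ v ∈ h, ε v) =
        (-1 : ℂ) ^ ((h.filter (fun i => ({i, j} : Finset ℕ) ∈ G)).card) := by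
      rw [hε]
      rw [Finset.prod_ite, Finset.prod_const, Finset.prod_const, one_pow, mul_one]
    by_contra hodd
    rw [Nat.not_even_iff_odd] at hodd
    rw [hpow, Odd.neg_one_pow hodd] at hS1
    norm_num at hS1
  refine ⟨?_, key⟩
  ext hhh jjj
  obtain ⟨h, hh⟩ := hhh
  obtain ⟨j, hj⟩ := jjj
  simp only [Matrix.mul_apply, contextMatrix, anticommMatrix, Matrix.of_apply,
    Matrix.zero_apply]
  have hite : ∀ v : ℕ, (if v ∈ h then (1 : ZMod 2) else 0) *
      (if ({v, j} : Finset ℕ) ∈ G then 1 else 0) =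
      if v ∈ h ∧ ({v, j} : Finset ℕ) ∈ G then 1 else 0 := by
    intro v; split_ifs <;> simp_all
  have hsub := Finset.sum_subtype (p := fun v => v ∈ V) (F := FinsetCoe.fintype V) V (fun x => Iff.rfl)
    (fun v => (if v ∈ h then (1 : ZMod 2) else 0) *
      (if ({v, j} : Finset ℕ) ∈ G then 1 else 0))
  have hzero : (∑ v ∈ V, (if v ∈ h then (1 : ZMod 2) else 0) *
      (if ({v, j} : Finset ℕ) ∈ G then 1 else 0)) = 0 := by
    rw [Finset.sum_congr rfl (fun v _ => hite v), Finset.sum_boole]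
    have hcard : V.filter (fun v => v ∈ h ∧ ({v, j} : Finset ℕ) ∈ G) =
        h.filter (fun i => ({i, j} : Finset ℕ) ∈ G) := by
      have hhV : h ⊆ V := (hgram.2.1 h hh).1
      ext v
      simp only [Finset.mem_filter]
      constructor
      · rintro ⟨_, hvh, hg⟩; exact ⟨hvh, hg⟩
      · rintro ⟨hvh, hg⟩; exact ⟨hhV hvh, hvh, hg⟩
    rw [hcard]
    obtain ⟨k, hk⟩ := key h hh j hj
    rw [hk]
    push_cast
    rw [← two_mul, show (2 : ZMod 2) = 0 from rfl, zero_mul]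
  exact hsub.symm.trans hzero


end
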